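/- For every real ν and every smooth function f : ℂ → ℂ, the intertwining relation (L_κ^ν (∇_{ν+κ} f))(z) = (∇_{ν+κ}(L_κ^{ν+κ} f))(z) + (2ν+κ)(∇_{ν+κ} f)(z) holds at every z ∈ ℂ with 1 + κ|z|² > 0. -/

import Mathlib

open Complex MeasureTheory Filter

/-- Wirtinger derivative ∂f/∂z = (1/2)(∂f/∂x − i ∂f/∂y). -/
noncomputable def wderiv (f : ℂ → ℂ) (z : ℂ) : ℂ :=
  (fderiv ℝ f z 1 - Complex.I * fderiv ℝ f z Complex.I) / 2

/-- Anti-holomorphic Wirtinger derivative ∂f/∂z̄ = (1/2)(∂f/∂x + i ∂f/∂y). -/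
noncomputable def wderivBar (f : ℂ → ℂ) (z : ℂ) : ℂ :=
  (fderiv ℝ f z 1 + Complex.I * fderiv ℝ f z Complex.I) / 2

/-- Twisted Laplacian L_κ^ν. -/
noncomputable def twistedLap (κ ν : ℝ) (f : ℂ → ℂ) (z : ℂ) : ℂ :=
  -(((1 + κ * Complex.normSq z : ℝ) : ℂ) ^ 2 * wderiv (wderivBar f) z
    + (ν : ℂ) * ((1 + κ * Complex.normSq z : ℝ) : ℂ) *
        (z * wderiv f z - (starRingEnd ℂ) z * wderivBar f z)
    - (ν : ℂ) ^ 2 * ((Complex.normSq z : ℝ) : ℂ) * f z)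

/-- (∇_α f)(z) = −(1+κ|z|²) ∂f/∂z + α z̄ f(z). -/
noncomputable def nabla (κ α : ℝ) (f : ℂ → ℂ) (z : ℂ) : ℂ :=
  -((1 + κ * Complex.normSq z : ℝ) : ℂ) * wderiv f z + (α : ℂ) * (starRingEnd ℂ) z * f z

/-- (∇*_α f)(z) = (1+κ|z|²) ∂f/∂z̄ + (α−κ) z f(z). -/
noncomputable def nablaStar (κ α : ℝ) (f : ℂ → ℂ) (z : ℂ) : ℂ :=
  ((1 + κ * Complex.normSq z : ℝ) : ℂ) * wderivBar f z + ((α - κ : ℝ) : ℂ) * z * f z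

/-- ∇_{ν+κ} ∘ ∇_{ν+2κ} ∘ ⋯ ∘ ∇_{ν+mκ} (the identity when m = 0). -/
noncomputable def nablaChain (κ : ℝ) : ℕ → ℝ → (ℂ → ℂ) → (ℂ → ℂ)
  | 0, _, f => f
  | m + 1, ν, f => nabla κ (ν + κ) (nablaChain κ m (ν + κ) f)

/-- (D g)(z) = (1+κ|z|²)² ∂g/∂z. -/
noncomputable def Dop (κ : ℝ) (g : ℂ → ℂ) (z : ℂ) : ℂ :=
  ((1 + κ * Complex.normSq z : ℝ) : ℂ) ^ 2 * wderiv g z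

/-- Generalized binomial coefficient C(r,k) for real r. -/
noncomputable def genBinom (r : ℝ) (k : ℕ) : ℝ :=
  (∏ i ∈ Finset.range k, (r - i)) / (Nat.factorial k)

/-- Jacobi polynomial P_j^{(a,b)}(x) with real parameters a, b. -/
noncomputable def jacobiP (a b : ℝ) (j : ℕ) (x : ℝ) : ℝ :=
  ∑ s ∈ Finset.range (j + 1),
    genBinom ((j : ℝ) + a) (j - s) * genBinom ((j : ℝ) + b) s *
      ((x - 1) / 2) ^ s * ((x + 1) / 2) ^ (j - s)

/-- Pochhammer symbol (a)_n = a(a+1)⋯(a+n−1). -/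
noncomputable def risingFactorial (a : ℝ) (n : ℕ) : ℝ :=
  ∏ i ∈ Finset.range n, (a + i)

section basics
variable {f g : ℂ → ℂ} {z : ℂ}

lemma wderiv_add (hf : DifferentiableAt ℝ f z) (hg : DifferentiableAt ℝ g z) :
    wderiv (fun w => f w + g w) z = wderiv f z + wderiv g z := by
  simp only [wderiv, fderiv_fun_add hf hg, ContinuousLinearMap.add_apply]; ring

lemma wderivBar_add (hf : DifferentiableAt ℝ f z) (hg : DifferentiableAt ℝ g z) :
    wderivBar (fun w => f w + g w) z = wderivBar f z + wderivBar g z := by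
  simp only [wderivBar, fderiv_fun_add hf hg, ContinuousLinearMap.add_apply]; ring

lemma wderiv_sub (hf : DifferentiableAt ℝ f z) (hg : DifferentiableAt ℝ g z) :
    wderiv (fun w => f w - g w) z = wderiv f z - wderiv g z := by
  simp only [wderiv, fderiv_fun_sub hf hg, ContinuousLinearMap.sub_apply]; ring

lemma wderivBar_sub (hf : DifferentiableAt ℝ f z) (hg : DifferentiableAt ℝ g z) :
    wderivBar (fun w => f w - g w) z = wderivBar f z - wderivBar g z := by
  simp only [wderivBar, fderiv_fun_sub hf hg, ContinuousLinearMap.sub_apply]; ring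

lemma wderiv_neg : wderiv (fun w => -f w) z = -wderiv f z := by
  simp only [wderiv, fderiv_fun_neg, ContinuousLinearMap.neg_apply]; ring

lemma wderivBar_neg : wderivBar (fun w => -f w) z = -wderivBar f z := by
  simp only [wderivBar, fderiv_fun_neg, ContinuousLinearMap.neg_apply]; ring

lemma wderiv_mul (hf : DifferentiableAt ℝ f z) (hg : DifferentiableAt ℝ g z) :
    wderiv (fun w => f w * g w) z = wderiv f z * g z + f z * wderiv g z := by
  simp only [wderiv, fderiv_fun_mul hf hg, ContinuousLinearMap.add_apply,
    ContinuousLinearMap.smul_apply, smul_eq_mul]; ring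

lemma wderivBar_mul (hf : DifferentiableAt ℝ f z) (hg : DifferentiableAt ℝ g z) :
    wderivBar (fun w => f w * g w) z = wderivBar f z * g z + f z * wderivBar g z := by
  simp only [wderivBar, fderiv_fun_mul hf hg, ContinuousLinearMap.add_apply,
    ContinuousLinearMap.smul_apply, smul_eq_mul]; ring

lemma wderiv_const (c : ℂ) : wderiv (fun _ => c) z = 0 := by
  simp [wderiv]

lemma wderivBar_const (c : ℂ) : wderivBar (fun _ => c) z = 0 := by
  simp [wderivBar]

lemma wderiv_id : wderiv (fun w => w) z = 1 := by
  simp only [wderiv, fderiv_id', ContinuousLinearMap.coe_id', id_eq]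
  simp [Complex.I_mul_I]

lemma wderivBar_id : wderivBar (fun w => w) z = 0 := by
  simp only [wderivBar, fderiv_id', ContinuousLinearMap.coe_id', id_eq]
  simp [Complex.I_mul_I]

lemma fderiv_conj' (z : ℂ) : fderiv ℝ (fun w : ℂ => (starRingEnd ℂ) w) z
    = Complex.conjCLE.toContinuousLinearMap := by
  have : (fun w : ℂ => (starRingEnd ℂ) w) = Complex.conjCLE := by
    funext w; simp [Complex.conjCLE_apply]
  rw [this]
  exact Complex.conjCLE.fderiv

lemma wderiv_conj : wderiv (fun w => (starRingEnd ℂ) w) z = 0 := by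
  simp only [wderiv, fderiv_conj']
  simp [Complex.conjCLE_apply]

lemma wderivBar_conj : wderivBar (fun w => (starRingEnd ℂ) w) z = 1 := by
  simp only [wderivBar, fderiv_conj']
  simp [Complex.conjCLE_apply]

lemma contDiff_conj' : ContDiff ℝ (⊤ : ℕ∞) (fun w : ℂ => (starRingEnd ℂ) w) := by
  have : (fun w : ℂ => (starRingEnd ℂ) w) = Complex.conjCLE := by
    funext w; simp [Complex.conjCLE_apply]
  rw [this]
  exact Complex.conjCLE.toContinuousLinearMap.contDiff

lemma wderiv_contDiff (hf : ContDiff ℝ (⊤ : ℕ∞) f) : ContDiff ℝ (⊤ : ℕ∞) (wderiv f) := by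
  have h : ContDiff ℝ (⊤ : ℕ∞) (fderiv ℝ f) := hf.fderiv_right (by exact_mod_cast le_top)
  have h1 : ContDiff ℝ (⊤ : ℕ∞) (fun z => fderiv ℝ f z 1) := h.clm_apply contDiff_const
  have hI : ContDiff ℝ (⊤ : ℕ∞) (fun z => fderiv ℝ f z Complex.I) := h.clm_apply contDiff_const
  exact ((h1.sub (contDiff_const.mul hI)).div_const 2)

lemma wderivBar_contDiff (hf : ContDiff ℝ (⊤ : ℕ∞) f) : ContDiff ℝ (⊤ : ℕ∞) (wderivBar f) := by
  have h : ContDiff ℝ (⊤ : ℕ∞) (fderiv ℝ f) := hf.fderiv_right (by exact_mod_cast le_top)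
  have h1 : ContDiff ℝ (⊤ : ℕ∞) (fun z => fderiv ℝ f z 1) := h.clm_apply contDiff_const
  have hI : ContDiff ℝ (⊤ : ℕ∞) (fun z => fderiv ℝ f z Complex.I) := h.clm_apply contDiff_const
  exact ((h1.add (contDiff_const.mul hI)).div_const 2)

lemma wderiv_wderivBar_comm (hf : ContDiff ℝ (⊤ : ℕ∞) f) (z : ℂ) :
    wderiv (wderivBar f) z = wderivBar (wderiv f) z := by
  have hdf : ContDiff ℝ (⊤ : ℕ∞) (fderiv ℝ f) := hf.fderiv_right (by exact_mod_cast le_top)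
  set f'' := fderiv ℝ (fderiv ℝ f) z with hf''def
  have hx : HasFDerivAt (fderiv ℝ f) f'' z := (hdf.differentiable (by simp) z).hasFDerivAt
  have hsym : ∀ v w : ℂ, f'' v w = f'' w v :=
    second_derivative_symmetric (fun y => (hf.differentiable (by simp) y).hasFDerivAt) hx
  have hev : ∀ v : ℂ, HasFDerivAt (fun w => fderiv ℝ f w v)
      ((ContinuousLinearMap.apply ℝ ℂ v).comp f'') z :=
    fun v => (ContinuousLinearMap.apply ℝ ℂ v).hasFDerivAt.comp z hx
  have hD1 : HasFDerivAt (wderivBar f)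
      ((2:ℂ)⁻¹ • (((ContinuousLinearMap.apply ℝ ℂ 1).comp f'')
        + Complex.I • ((ContinuousLinearMap.apply ℝ ℂ Complex.I).comp f''))) z := by
    have h := (((hev 1).add ((hev Complex.I).const_mul Complex.I)).const_mul (2:ℂ)⁻¹)
    have e : wderivBar f = fun w => (2:ℂ)⁻¹ *
        (fderiv ℝ f w 1 + Complex.I * fderiv ℝ f w Complex.I) := by
      funext w; rw [wderivBar, div_eq_inv_mul]
    rw [e]; exact h
  have hD2 : HasFDerivAt (wderiv f)
      ((2:ℂ)⁻¹ • (((ContinuousLinearMap.apply ℝ ℂ 1).comp f'')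
        - Complex.I • ((ContinuousLinearMap.apply ℝ ℂ Complex.I).comp f''))) z := by
    have h := (((hev 1).sub ((hev Complex.I).const_mul Complex.I)).const_mul (2:ℂ)⁻¹)
    have e : wderiv f = fun w => (2:ℂ)⁻¹ *
        (fderiv ℝ f w 1 - Complex.I * fderiv ℝ f w Complex.I) := by
      funext w; rw [wderiv, div_eq_inv_mul]
    rw [e]; exact h
  rw [wderiv, wderivBar, hD1.fderiv, hD2.fderiv]
  simp only [ContinuousLinearMap.smul_apply, ContinuousLinearMap.add_apply,
    ContinuousLinearMap.sub_apply, ContinuousLinearMap.comp_apply,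
    ContinuousLinearMap.apply_apply, smul_eq_mul]
  linear_combination (Complex.I / 2) * hsym 1 Complex.I
end basics


@[fun_prop]
lemma differentiable_conj' : Differentiable ℝ (fun w : ℂ => (starRingEnd ℂ) w) := by
  have : (fun w : ℂ => (starRingEnd ℂ) w) = Complex.conjCLE := by
    funext w; simp [Complex.conjCLE_apply]
  rw [this]; exact Complex.conjCLE.toContinuousLinearMap.differentiable

theorem stmt2 (κ ν : ℝ) (f : ℂ → ℂ) (hf : ContDiff ℝ (⊤ : ℕ∞) f)
    (z : ℂ) (hz : 0 < 1 + κ * Complex.normSq z) :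
    twistedLap κ ν (nabla κ (ν + κ) f) z
      = nabla κ (ν + κ) (twistedLap κ (ν + κ) f) z
        + ((2 * ν + κ : ℝ) : ℂ) * nabla κ (ν + κ) f z := by
  have hGcast : ∀ w : ℂ, ((1 + κ * Complex.normSq w : ℝ) : ℂ)
      = 1 + (κ : ℂ) * (w * (starRingEnd ℂ) w) := by
    intro w; push_cast; rw [Complex.mul_conj]
  have hNcast : ∀ w : ℂ, ((Complex.normSq w : ℝ) : ℂ) = w * (starRingEnd ℂ) w :=
    fun w => (Complex.mul_conj w).symm
  have hle : (1 : WithTop ℕ∞) ≤ ((⊤ : ℕ∞) : WithTop ℕ∞) := by exact_mod_cast le_top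
  have hdf : Differentiable ℝ f := hf.differentiable (by simp)
  have hf1 : ContDiff ℝ (⊤ : ℕ∞) (wderiv f) := wderiv_contDiff hf
  have hfb : ContDiff ℝ (⊤ : ℕ∞) (wderivBar f) := wderivBar_contDiff hf
  have hf11 : ContDiff ℝ (⊤ : ℕ∞) (wderiv (wderivBar f)) := wderiv_contDiff hfb
  have hdf1 : Differentiable ℝ (wderiv f) := hf1.differentiable (by simp)
  have hdfb : Differentiable ℝ (wderivBar f) := hfb.differentiable (by simp)
  have hdf11 : Differentiable ℝ (wderiv (wderivBar f)) := hf11.differentiable (by simp)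
  -- step 1 : polynomial form of nabla
  have hNeq : nabla κ (ν + κ) f = fun w =>
      -((1 + (κ : ℂ) * (w * (starRingEnd ℂ) w)) * wderiv f w)
        + ((ν + κ : ℝ) : ℂ) * (starRingEnd ℂ) w * f w := by
    funext w; simp only [nabla, hGcast w]; ring
  -- step 2 : wderivBar of nabla
  have hNbar : ∀ w, wderivBar (nabla κ (ν + κ) f) w
      = -((κ : ℂ) * (w * wderiv f w))
        - (1 + (κ : ℂ) * (w * (starRingEnd ℂ) w)) * wderiv (wderivBar f) w
        + ((ν + κ : ℝ) : ℂ) * f w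
        + ((ν + κ : ℝ) : ℂ) * (starRingEnd ℂ) w * wderivBar f w := by
    intro w; rw [hNeq]
    simp (disch := fun_prop) only [wderivBar_add, wderivBar_sub, wderivBar_mul,
      wderivBar_neg, wderivBar_const, wderivBar_id, wderivBar_conj]
    rw [← wderiv_wderivBar_comm hf w]
    ring
  have hNbarF : wderivBar (nabla κ (ν + κ) f) = fun w =>
      -((κ : ℂ) * (w * wderiv f w))
        - (1 + (κ : ℂ) * (w * (starRingEnd ℂ) w)) * wderiv (wderivBar f) w
        + ((ν + κ : ℝ) : ℂ) * f w
        + ((ν + κ : ℝ) : ℂ) * (starRingEnd ℂ) w * wderivBar f w := funext hNbar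
  -- step 3 : wderiv of wderivBar of nabla at z
  have hW : wderiv (wderivBar (nabla κ (ν + κ) f)) z
      = (((ν + κ : ℝ) : ℂ) - (κ : ℂ)) * wderiv f z
        - (κ : ℂ) * z * wderiv (wderiv f) z
        + (((ν + κ : ℝ) : ℂ) - (κ : ℂ)) * (starRingEnd ℂ) z * wderiv (wderivBar f) z
        - (1 + (κ : ℂ) * (z * (starRingEnd ℂ) z)) * wderiv (wderiv (wderivBar f)) z := by
    rw [hNbarF]
    simp (disch := fun_prop) only [wderiv_add, wderiv_sub, wderiv_mul,
      wderiv_neg, wderiv_const, wderiv_id, wderiv_conj]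
    ring
  -- step 4 : wderiv of nabla at z
  have hNd : wderiv (nabla κ (ν + κ) f) z
      = (((ν + κ : ℝ) : ℂ) - (κ : ℂ)) * (starRingEnd ℂ) z * wderiv f z
        - (1 + (κ : ℂ) * (z * (starRingEnd ℂ) z)) * wderiv (wderiv f) z := by
    rw [hNeq]
    simp (disch := fun_prop) only [wderiv_add, wderiv_sub, wderiv_mul,
      wderiv_neg, wderiv_const, wderiv_id, wderiv_conj]
    ring
  -- step 5 : polynomial form of twistedLap
  have hTeq : twistedLap κ (ν + κ) f = fun w =>
      -((1 + (κ : ℂ) * (w * (starRingEnd ℂ) w))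
          * ((1 + (κ : ℂ) * (w * (starRingEnd ℂ) w)) * wderiv (wderivBar f) w)
        + ((ν + κ : ℝ) : ℂ) * ((1 + (κ : ℂ) * (w * (starRingEnd ℂ) w))
          * (w * wderiv f w - (starRingEnd ℂ) w * wderivBar f w))
        - ((ν + κ : ℝ) : ℂ) * (((ν + κ : ℝ) : ℂ) * (w * ((starRingEnd ℂ) w * f w)))) := by
    funext w; simp only [twistedLap, hGcast w, hNcast w]; ring
  -- step 6 : wderiv of twistedLap at z
  have hTd : wderiv (twistedLap κ (ν + κ) f) z
      = -(2 * (κ : ℂ) * (starRingEnd ℂ) z * (1 + (κ : ℂ) * (z * (starRingEnd ℂ) z))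
            * wderiv (wderivBar f) z
        + (1 + (κ : ℂ) * (z * (starRingEnd ℂ) z)) ^ 2 * wderiv (wderiv (wderivBar f)) z
        + ((ν + κ : ℝ) : ℂ) * (κ : ℂ) * (starRingEnd ℂ) z
            * (z * wderiv f z - (starRingEnd ℂ) z * wderivBar f z)
        + ((ν + κ : ℝ) : ℂ) * (1 + (κ : ℂ) * (z * (starRingEnd ℂ) z))
            * (wderiv f z + z * wderiv (wderiv f) z
               - (starRingEnd ℂ) z * wderiv (wderivBar f) z)
        - ((ν + κ : ℝ) : ℂ) ^ 2 * (starRingEnd ℂ) z * f z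
        - ((ν + κ : ℝ) : ℂ) ^ 2 * z * (starRingEnd ℂ) z * wderiv f z) := by
    rw [hTeq]
    simp (disch := fun_prop) only [wderiv_add, wderiv_sub, wderiv_mul,
      wderiv_neg, wderiv_const, wderiv_id, wderiv_conj]
    ring
  -- final assembly
  simp only [twistedLap, nabla]
  rw [hW, hNd, hNbar z, hTd, hGcast z, hNcast z]
  push_cast
  ring
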